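/- The trigonometric Dunkl operators D_i^{trig} := X_i D_i − k∑_{j<i} s_{ij}, where D_i = ħ∂_i − ∑_{j≠i} (k/(X_i − X_j))(1 − s_{ij}) are the rational Dunkl operators acting on ℂ[X_1^{±1},…,X_N^{±1}] together with the S_N-action, pairwise commute: [D_i^{trig}, D_m^{trig}] = 0 for all i, m. -/

import Mathlib

/- STATEMENT 5: The trigonometric Dunkl operators
D_i^{trig} = X_i D_i − k ∑_{j<i} s_{ij}, where
D_i = hbar∂_i − ∑_{j≠i} (k/(X_i − X_j))(1 − s_{ij}) are the rational Dunkl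
operators, pairwise commute.

The operators act on the field K of rational functions in X_1,…,X_N; the
partial derivatives ∂_i are characterized as ℂ-linear derivations of K with
∂_i X_j = δ_{ij}, and s_{ij} as the ℂ-algebra automorphisms of K swapping
X_i and X_j.  (Such operators preserve ℂ[X_1^{±1},…,X_N^{±1}] ⊂ K.) -/

noncomputable section
set_option maxHeartbeats 1000000
set_option synthInstance.maxHeartbeats 1000000
set_option linter.unusedVariables false
set_option linter.unusedSectionVars false

open MvPolynomial

variable (N : ℕ)

abbrev RatField (N : ℕ) := FractionRing (MvPolynomial (Fin N) ℂ)

/-- the coordinate X_i as an element of the rational function field -/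
noncomputable def Xc {N : ℕ} (i : Fin N) : RatField N :=
  algebraMap (MvPolynomial (Fin N) ℂ) (RatField N) (X i)

/-- the rational Dunkl operator D_i = hbar∂_i − ∑_{j≠i} (k/(X_i−X_j))(1 − s_{ij}) -/
noncomputable def Drat {N : ℕ} (hbar k : ℂ) (pd : Fin N → (RatField N →ₗ[ℂ] RatField N))
    (S : Fin N → Fin N → (RatField N ≃ₐ[ℂ] RatField N)) (i : Fin N)
    (F : RatField N) : RatField N :=
  (algebraMap ℂ (RatField N) hbar) * pd i F -
    ∑ j ∈ Finset.univ.erase i,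
      (algebraMap ℂ (RatField N) k) * (Xc i - Xc j)⁻¹ * (F - S i j F)

/-- the trigonometric Dunkl operator D_i^{trig} = X_i D_i − k ∑_{j<i} s_{ij} -/
noncomputable def Dtrig {N : ℕ} (hbar k : ℂ) (pd : Fin N → (RatField N →ₗ[ℂ] RatField N))
    (S : Fin N → Fin N → (RatField N ≃ₐ[ℂ] RatField N)) (i : Fin N)
    (F : RatField N) : RatField N :=
  Xc i * Drat hbar k pd S i F -
    ∑ j ∈ Finset.univ.filter (fun j => j < i),
      (algebraMap ℂ (RatField N) k) * S i j F

/-! ### Auxiliary development -/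

namespace Dunkl
variable {N : ℕ}

example : IsScalarTower ℂ (MvPolynomial (Fin N) ℂ) (RatField N) := inferInstance

lemma Xc_injective : Function.Injective (Xc (N := N)) := fun i j h =>
  MvPolynomial.X_injective (IsFractionRing.injective (MvPolynomial (Fin N) ℂ) (RatField N) h)

lemma Xc_sub_ne {i j : Fin N} (h : i ≠ j) : Xc i - Xc j ≠ 0 :=
  sub_ne_zero.mpr (fun e => h (Xc_injective e))

/-- two ℂ-algebra endomorphisms of the rational function field agreeing on the
coordinates agree everywhere -/
lemma algHom_pt (f g : RatField N →ₐ[ℂ] RatField N)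
    (h : ∀ n, f (Xc n) = g (Xc n)) (F : RatField N) : f F = g F := by
  have h1 : f.comp (IsScalarTower.toAlgHom ℂ (MvPolynomial (Fin N) ℂ) (RatField N))
      = g.comp (IsScalarTower.toAlgHom ℂ (MvPolynomial (Fin N) ℂ) (RatField N)) :=
    MvPolynomial.algHom_ext (fun n => h n)
  have h2 : (f : RatField N →+* RatField N).comp
        (algebraMap (MvPolynomial (Fin N) ℂ) (RatField N))
      = (g : RatField N →+* RatField N).comp
        (algebraMap (MvPolynomial (Fin N) ℂ) (RatField N)) := by
    exact RingHom.ext fun p => AlgHom.congr_fun h1 p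
  have h3 := IsLocalization.ringHom_ext (nonZeroDivisors (MvPolynomial (Fin N) ℂ)) h2
  exact RingHom.congr_fun h3 F

/-- a Leibniz ℂ-linear map vanishing on the coordinates vanishes -/
lemma der_zero (D : RatField N →ₗ[ℂ] RatField N)
    (hD : ∀ a b : RatField N, D (a * b) = a * D b + D a * b)
    (h0 : ∀ n, D (Xc n) = 0) : ∀ F, D F = 0 := by
  have h1 : D 1 = 0 := by
    have := hD 1 1
    simp only [one_mul, mul_one] at this
    have h' : D 1 + D 1 = D 1 + 0 := by rw [add_zero]; exact this.symm
    exact add_left_cancel h'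
  have hpoly : ∀ p : MvPolynomial (Fin N) ℂ,
      D (algebraMap (MvPolynomial (Fin N) ℂ) (RatField N) p) = 0 := by
    intro p
    induction p using MvPolynomial.induction_on with
    | C a =>
        have e1 : (C a : MvPolynomial (Fin N) ℂ) = algebraMap ℂ (MvPolynomial (Fin N) ℂ) a := rfl
        rw [e1, ← IsScalarTower.algebraMap_apply ℂ (MvPolynomial (Fin N) ℂ) (RatField N),
          Algebra.algebraMap_eq_smul_one, map_smul, h1]
        exact smul_zero (A := RatField N) a
    | add p q hp hq => rw [map_add, map_add, hp, hq, add_zero]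
    | mul_X p n hp =>
        rw [map_mul]
        rw [hD]
        rw [show (algebraMap (MvPolynomial (Fin N) ℂ) (RatField N)) (X n) = Xc n from rfl]
        rw [h0, hp, mul_zero, zero_mul, add_zero]
  intro F
  obtain ⟨a, b, hb, hab⟩ := IsFractionRing.div_surjective (A := MvPolynomial (Fin N) ℂ) F
  have hbne : (algebraMap (MvPolynomial (Fin N) ℂ) (RatField N)) b ≠ 0 := by
    intro hz
    have := IsFractionRing.to_map_eq_zero_iff.mp hz
    subst this
    simpa using nonZeroDivisors.ne_zero hb rfl
  have hinv : D ((algebraMap (MvPolynomial (Fin N) ℂ) (RatField N) b)⁻¹) = 0 := by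
    have h2 := hD (algebraMap (MvPolynomial (Fin N) ℂ) (RatField N) b)
      ((algebraMap (MvPolynomial (Fin N) ℂ) (RatField N) b)⁻¹)
    rw [mul_inv_cancel₀ hbne, h1, hpoly, zero_mul, add_zero] at h2
    exact (mul_eq_zero.mp h2.symm).resolve_left hbne
  rw [← hab, div_eq_mul_inv, hD, hpoly, hinv, mul_zero, zero_mul, add_zero]

section Ops
variable (hbar k : ℂ)
  (pd : Fin N → (RatField N →ₗ[ℂ] RatField N))
  (S : Fin N → Fin N → (RatField N ≃ₐ[ℂ] RatField N))

section Slem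
variable (hS : ∀ i j m : Fin N, S i j (Xc m) = Xc (Equiv.swap i j m))
include hS

lemma S_symm (a b : Fin N) (F : RatField N) : S a b F = S b a F := by
  have := algHom_pt (S a b).toAlgHom (S b a).toAlgHom (fun n => by
    simp only [AlgEquiv.toAlgHom_eq_coe, AlgEquiv.coe_toAlgHom, AlgHom.coe_coe, hS, Equiv.swap_comm a b]) F
  simpa using this

lemma S_invol (a b : Fin N) (F : RatField N) : S a b (S a b F) = F := by
  have := algHom_pt ((S a b).toAlgHom.comp (S a b).toAlgHom) (AlgHom.id ℂ _) (fun n => by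
    simp only [AlgHom.coe_comp, AlgEquiv.toAlgHom_eq_coe, AlgEquiv.coe_toAlgHom, AlgHom.coe_coe, Function.comp_apply,
      AlgHom.coe_id, id_eq, hS, Equiv.swap_apply_self]) F
  simpa using this

lemma S_diag (a : Fin N) (F : RatField N) : S a a F = F := by
  have := algHom_pt (S a a).toAlgHom (AlgHom.id ℂ _) (fun n => by
    simp only [AlgEquiv.toAlgHom_eq_coe, AlgEquiv.coe_toAlgHom, AlgHom.coe_coe, AlgHom.coe_id, id_eq, hS,
      Equiv.swap_self, Equiv.refl_apply]) F
  simpa using this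

lemma S_conj (a b i j : Fin N) (F : RatField N) :
    S a b (S i j F)
      = S (Equiv.swap a b i) (Equiv.swap a b j) (S a b F) := by
  have := algHom_pt ((S a b).toAlgHom.comp (S i j).toAlgHom)
      ((S (Equiv.swap a b i) (Equiv.swap a b j)).toAlgHom.comp (S a b).toAlgHom) (fun n => by
    simp only [AlgHom.coe_comp, AlgEquiv.toAlgHom_eq_coe, AlgEquiv.coe_toAlgHom, AlgHom.coe_coe, Function.comp_apply, hS]
    congr 1
    rw [Equiv.swap_apply_apply]
    simp [Equiv.Perm.mul_apply]) F
  simpa using this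

lemma S_g (a b u v : Fin N) :
    S a b ((Xc u - Xc v)⁻¹)
      = (Xc (Equiv.swap a b u) - Xc (Equiv.swap a b v))⁻¹ := by
  rw [map_inv₀, map_sub, hS, hS]

end Slem

section pdlem
variable (hLeib : ∀ i, ∀ a b : RatField N, pd i (a * b) = a * pd i b + pd i a * b)
  (hpdX : ∀ i j : Fin N, pd i (Xc j) = if i = j then 1 else 0)

include hLeib in
lemma pd_one (i : Fin N) : pd i (1 : RatField N) = 0 := by
  have := hLeib i 1 1
  simp only [one_mul, mul_one] at this
  have h' : pd i 1 + pd i 1 = pd i 1 + 0 := by rw [add_zero]; exact this.symm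
  exact add_left_cancel h'

lemma pd_cmul (i : Fin N) (t : ℂ) (G : RatField N) :
    pd i (algebraMap ℂ (RatField N) t * G) = algebraMap ℂ (RatField N) t * pd i G := by
  have h1 : algebraMap ℂ (RatField N) t * G = t • G := (Algebra.smul_def t G).symm
  have h2 : algebraMap ℂ (RatField N) t * pd i G = t • pd i G := (Algebra.smul_def t _).symm
  rw [h1, h2, map_smul]

include hLeib in
lemma pd_inv (i : Fin N) {u : RatField N} (hu : u ≠ 0) :
    pd i u⁻¹ = -(u⁻¹ * u⁻¹ * pd i u) := by
  have h0 : pd i (u * u⁻¹) = 0 := by rw [mul_inv_cancel₀ hu, pd_one pd hLeib]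
  rw [hLeib] at h0
  have h1 : u * pd i u⁻¹ = -(pd i u * u⁻¹) := eq_neg_of_add_eq_zero_left h0
  have h2 : pd i u⁻¹ = u⁻¹ * (u * pd i u⁻¹) := by
    rw [← mul_assoc, inv_mul_cancel₀ hu, one_mul]
  rw [h2, h1]
  ring

include hLeib hpdX in
lemma pd_g (i u v : Fin N) (huv : u ≠ v) :
    pd i ((Xc u - Xc v)⁻¹)
      = -((Xc u - Xc v)⁻¹ * (Xc u - Xc v)⁻¹
          * ((if i = u then 1 else 0) - (if i = v then 1 else 0))) := by
  rw [pd_inv pd hLeib i (Xc_sub_ne huv), map_sub, hpdX, hpdX]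

include hLeib hpdX in
lemma pd_comm (i m : Fin N) (F : RatField N) : pd i (pd m F) = pd m (pd i F) := by
  have hz := der_zero ((pd i).comp (pd m) - (pd m).comp (pd i)) (fun a b => by
    simp only [LinearMap.sub_apply, LinearMap.comp_apply, hLeib, map_add]
    ring) (fun n => by
    simp only [LinearMap.sub_apply, LinearMap.comp_apply, hpdX]
    split_ifs <;> simp [pd_one pd hLeib, map_zero]) F
  simp only [LinearMap.sub_apply, LinearMap.comp_apply] at hz
  exact sub_eq_zero.mp hz

end pdlem
section SPD
variable (hLeib : ∀ i, ∀ a b : RatField N, pd i (a * b) = a * pd i b + pd i a * b)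
  (hpdX : ∀ i j : Fin N, pd i (Xc j) = if i = j then 1 else 0)
  (hS : ∀ i j m : Fin N, S i j (Xc m) = Xc (Equiv.swap i j m))
include hLeib hpdX hS

lemma S_pd (a b l : Fin N) (F : RatField N) :
    S a b (pd l F) = pd (Equiv.swap a b l) (S a b F) := by
  have key : ∀ G, S a b (pd l (S a b G)) = pd (Equiv.swap a b l) G := by
    have hz := der_zero
      ((S a b).toLinearMap ∘ₗ pd l ∘ₗ (S a b).toLinearMap - pd (Equiv.swap a b l)) (fun x y => by
        simp only [LinearMap.sub_apply, LinearMap.comp_apply, AlgEquiv.toLinearMap_apply,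
          map_mul, hLeib, map_add, S_invol S hS]
        ring) (fun n => by
        simp only [LinearMap.sub_apply, LinearMap.comp_apply, AlgEquiv.toLinearMap_apply,
          hS, hpdX]
        by_cases h : l = Equiv.swap a b n
        · have h2 : Equiv.swap a b l = n := by rw [h, Equiv.swap_apply_self]
          simp [h, h2]
        · have h2 : Equiv.swap a b l ≠ n := fun e => h (by rw [← e, Equiv.swap_apply_self])
          simp [h, h2])
    intro G
    have := hz G
    simp only [LinearMap.sub_apply, LinearMap.comp_apply, AlgEquiv.toLinearMap_apply] at this
    exact sub_eq_zero.mp this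
  have := key (S a b F)
  rwa [S_invol S hS] at this

end SPD
end Ops

noncomputable def Top (k : ℂ) (S : Fin N → Fin N → (RatField N ≃ₐ[ℂ] RatField N))
    (i j : Fin N) (F : RatField N) : RatField N :=
  algebraMap ℂ (RatField N) k * (Xc i - Xc j)⁻¹ * (F - S i j F)

noncomputable def Aop (k : ℂ) (S : Fin N → Fin N → (RatField N ≃ₐ[ℂ] RatField N))
    (i : Fin N) (F : RatField N) : RatField N :=
  -∑ j ∈ Finset.univ.erase i, Top k S i j F

section Ops2
variable (hbar k : ℂ)
  (pd : Fin N → (RatField N →ₗ[ℂ] RatField N))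
  (S : Fin N → Fin N → (RatField N ≃ₐ[ℂ] RatField N))

lemma Drat_eq (i : Fin N) (F : RatField N) :
    Drat hbar k pd S i F = algebraMap ℂ (RatField N) hbar * pd i F + Aop k S i F := by
  simp [Drat, Aop, Top, sub_eq_add_neg]

lemma Top_add (i j : Fin N) (G H : RatField N) :
    Top k S i j (G + H) = Top k S i j G + Top k S i j H := by
  simp only [Top, map_add]; ring

lemma Top_neg (i j : Fin N) (G : RatField N) : Top k S i j (-G) = -Top k S i j G := by
  simp only [Top, map_neg]; ring

lemma Top_sum {α : Type*} (i j : Fin N) (s : Finset α) (f : α → RatField N) :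
    Top k S i j (∑ l ∈ s, f l) = ∑ l ∈ s, Top k S i j (f l) := by
  simp only [Top, map_sum, ← Finset.sum_sub_distrib, Finset.mul_sum]

lemma Top_cmul (i j : Fin N) (t : ℂ) (G : RatField N) :
    Top k S i j (algebraMap ℂ (RatField N) t * G)
      = algebraMap ℂ (RatField N) t * Top k S i j G := by
  simp only [Top, map_mul, AlgEquiv.commutes]; ring

lemma Aop_add (i : Fin N) (G H : RatField N) :
    Aop k S i (G + H) = Aop k S i G + Aop k S i H := by
  simp only [Aop, Top_add, Finset.sum_add_distrib, neg_add]

lemma Aop_cmul (i : Fin N) (t : ℂ) (G : RatField N) :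
    Aop k S i (algebraMap ℂ (RatField N) t * G)
      = algebraMap ℂ (RatField N) t * Aop k S i G := by
  simp only [Aop, Top_cmul, ← Finset.mul_sum, mul_neg]

lemma Aop_Aop (i m : Fin N) (F : RatField N) :
    Aop k S i (Aop k S m F)
      = ∑ j ∈ Finset.univ.erase i, ∑ l ∈ Finset.univ.erase m, Top k S i j (Top k S m l F) := by
  simp only [Aop, Top_neg, Top_sum, Finset.sum_neg_distrib, neg_neg]

section withS
variable (hS : ∀ i j m : Fin N, S i j (Xc m) = Xc (Equiv.swap i j m))
include hS

lemma S_Top (a b m l : Fin N) (F : RatField N) :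
    S a b (Top k S m l F)
      = Top k S (Equiv.swap a b m) (Equiv.swap a b l) (S a b F) := by
  simp only [Top, map_mul, map_sub, AlgEquiv.commutes, S_g S hS]
  rw [S_conj S hS a b m l]

lemma S_Aop (a b m : Fin N) (F : RatField N) :
    S a b (Aop k S m F) = Aop k S (Equiv.swap a b m) (S a b F) := by
  simp only [Aop, map_neg, map_sum, neg_inj, S_Top k S hS]
  refine Finset.sum_equiv (Equiv.swap a b) (fun l => ?_) (fun l _ => rfl)
  simp only [Finset.mem_erase, Finset.mem_univ, and_true]
  exact not_congr (Equiv.apply_eq_iff_eq _).symm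

variable (hLeib : ∀ i, ∀ a b : RatField N, pd i (a * b) = a * pd i b + pd i a * b)
  (hpdX : ∀ i j : Fin N, pd i (Xc j) = if i = j then 1 else 0)
include hLeib hpdX

lemma S_Drat (a b l : Fin N) (F : RatField N) :
    S a b (Drat hbar k pd S l F)
      = Drat hbar k pd S (Equiv.swap a b l) (S a b F) := by
  rw [Drat_eq, Drat_eq, map_add, map_mul, AlgEquiv.commutes,
    S_pd pd S hLeib hpdX hS, S_Aop k S hS]

end withS
end Ops2


section Hard
variable (hbar k : ℂ)
  (pd : Fin N → (RatField N →ₗ[ℂ] RatField N))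
  (S : Fin N → Fin N → (RatField N ≃ₐ[ℂ] RatField N))
  (hS : ∀ i j m : Fin N, S i j (Xc m) = Xc (Equiv.swap i j m))

lemma g_neg (a b : Fin N) : (Xc a - Xc b)⁻¹ = -(Xc b - Xc a)⁻¹ := by
  rw [show Xc a - Xc b = -(Xc b - Xc a) by ring]
  exact inv_neg (R := RatField N)

lemma g_key {i m t : Fin N} (hit : i ≠ t) (hmi : m ≠ i) (hmt : m ≠ t) :
    (Xc i - Xc t)⁻¹ * (Xc m - Xc t)⁻¹ + (Xc m - Xc i)⁻¹ * (Xc m - Xc t)⁻¹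
      = (Xc i - Xc t)⁻¹ * (Xc m - Xc i)⁻¹ := by
  have h1 := Xc_sub_ne hit
  have h2 := Xc_sub_ne hmi
  have h3 := Xc_sub_ne hmt
  field_simp
  ring

include hS

lemma Top_swap {i j m l : Fin N} (hmi : m ≠ i) (hmj : m ≠ j) (hli : l ≠ i) (hlj : l ≠ j)
    (F : RatField N) : Top k S i j (Top k S m l F) = Top k S m l (Top k S i j F) := by
  simp only [Top, map_mul, map_sub, AlgEquiv.commutes, S_g S hS]
  rw [S_conj S hS i j m l]
  simp only [Equiv.swap_apply_of_ne_of_ne hmi hmj, Equiv.swap_apply_of_ne_of_ne hli hlj,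
    Equiv.swap_apply_of_ne_of_ne hmi.symm hli.symm, Equiv.swap_apply_of_ne_of_ne hmj.symm hlj.symm]
  ring

lemma Top_absorb {i m : Fin N} (him : i ≠ m) (F : RatField N) :
    Top k S i m (Top k S m i F) = 0 := by
  simp only [Top, map_mul, map_sub, AlgEquiv.commutes, S_g S hS, Equiv.swap_apply_left,
    Equiv.swap_apply_right]
  rw [S_symm S hS m i, S_invol S hS]
  rw [g_neg i m]
  ring

lemma Top_triple {i m t : Fin N} (him : i ≠ m) (hti : t ≠ i) (htm : t ≠ m) (F : RatField N) :
    (Top k S i t (Top k S m i F) - Top k S m i (Top k S i t F))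
      + (Top k S i t (Top k S m t F) - Top k S m t (Top k S i t F))
      + (Top k S i m (Top k S m t F) - Top k S m t (Top k S i m F)) = 0 := by
  have e1 : ∀ G, S i t (S m i G) = S m t (S i t G) := fun G => by
    rw [S_conj S hS i t m i, Equiv.swap_apply_of_ne_of_ne him.symm htm.symm,
      Equiv.swap_apply_left]
  have e3 : ∀ G, S i t (S m t G) = S m i (S i t G) := fun G => by
    rw [S_conj S hS i t m t, Equiv.swap_apply_of_ne_of_ne him.symm htm.symm,
      Equiv.swap_apply_right]
  have e5 : ∀ G, S m i (S m t G) = S i t (S m i G) := fun G => by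
    rw [S_conj S hS m i m t, Equiv.swap_apply_left,
      Equiv.swap_apply_of_ne_of_ne htm hti]
  have e6 : ∀ G, S m t (S m i G) = S i t (S m t G) := fun G => by
    rw [S_conj S hS m t m i, Equiv.swap_apply_left,
      Equiv.swap_apply_of_ne_of_ne him hti.symm, S_symm S hS t i]
  have hkey := g_key hti.symm him.symm htm.symm
  simp only [Top, map_mul, map_sub, AlgEquiv.commutes, S_g S hS]
  simp only [Equiv.swap_apply_left, Equiv.swap_apply_right,
    Equiv.swap_apply_of_ne_of_ne him.symm htm.symm,
    Equiv.swap_apply_of_ne_of_ne htm hti,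
    Equiv.swap_apply_of_ne_of_ne him hti.symm,
    Equiv.swap_apply_of_ne_of_ne hti htm]
  simp only [S_symm S hS i m]
  simp only [e5, e6, e1, e3]
  rw [g_neg i m]
  linear_combination (algebraMap ℂ (RatField N) k * algebraMap ℂ (RatField N) k
    * (S m t (S i t F) - S m i (S i t F))) * hkey

lemma Aop_comm {i m : Fin N} (him : i ≠ m) (F : RatField N) :
    Aop k S i (Aop k S m F) = Aop k S m (Aop k S i F) := by
  rw [← sub_eq_zero, Aop_Aop, Aop_Aop, Finset.sum_comm (s := Finset.univ.erase m)]
  rw [← Finset.sum_sub_distrib]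
  simp only [← Finset.sum_sub_distrib]
  -- goal : ∑ j ∈ erase i, ∑ l ∈ erase m, (Top i j (Top m l F) - Top m l (Top i j F)) = 0
  set f : Fin N → Fin N → RatField N :=
    fun j l => Top k S i j (Top k S m l F) - Top k S m l (Top k S i j F) with hf
  have hmi : m ∈ Finset.univ.erase i := Finset.mem_erase.mpr ⟨him.symm, Finset.mem_univ m⟩
  have him' : i ∈ Finset.univ.erase m := Finset.mem_erase.mpr ⟨him, Finset.mem_univ i⟩
  set U : Finset (Fin N) := (Finset.univ.erase i).erase m with hU
  have hmU : m ∉ U := Finset.notMem_erase m _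
  have hiU : i ∉ U := fun h => (Finset.mem_erase.mp ((Finset.mem_erase.mp h).2)).1 rfl
  have hUi : Finset.univ.erase i = insert m U := (Finset.insert_erase hmi).symm
  have hUm : Finset.univ.erase m = insert i U := by
    rw [hU, Finset.erase_right_comm]
    exact (Finset.insert_erase him').symm
  have hinner : ∀ j ∈ U, ∑ l ∈ Finset.univ.erase m, f j l = f j i + f j j := by
    intro j hj
    have hjm : j ≠ m := (Finset.mem_erase.mp hj).1
    have hji : j ≠ i := (Finset.mem_erase.mp ((Finset.mem_erase.mp hj).2)).1
    rw [hUm, Finset.sum_insert hiU]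
    congr 1
    apply Finset.sum_eq_single_of_mem j (by simp [Finset.mem_erase, hjm, hji, U])
    intro l hl hlj
    have hlm : l ≠ m := (Finset.mem_erase.mp hl).1
    have hli : l ≠ i := (Finset.mem_erase.mp ((Finset.mem_erase.mp hl).2)).1
    exact sub_eq_zero.mpr (Top_swap k S hS him.symm hjm.symm hli hlj F)
  rw [hUi, Finset.sum_insert hmU]
  have hfirst : ∑ l ∈ Finset.univ.erase m, f m l = f m i + ∑ l ∈ U, f m l := by
    rw [hUm, Finset.sum_insert hiU]
  rw [hfirst, Finset.sum_congr rfl hinner]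
  have hfmi : f m i = 0 := by
    rw [hf]
    simp only
    rw [Top_absorb k S hS him F, Top_absorb k S hS him.symm F, sub_zero]
  rw [hfmi, zero_add, ← Finset.sum_add_distrib]
  apply Finset.sum_eq_zero
  intro t ht
  have htm : t ≠ m := (Finset.mem_erase.mp ht).1
  have hti : t ≠ i := (Finset.mem_erase.mp ((Finset.mem_erase.mp ht).2)).1
  have := Top_triple k S hS him hti htm F
  simp only [hf]
  linear_combination this

end Hard

section Cross
variable (hbar k : ℂ)
  (pd : Fin N → (RatField N →ₗ[ℂ] RatField N))
  (S : Fin N → Fin N → (RatField N ≃ₐ[ℂ] RatField N))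
  (hLeib : ∀ i, ∀ a b : RatField N, pd i (a * b) = a * pd i b + pd i a * b)
  (hpdX : ∀ i j : Fin N, pd i (Xc j) = if i = j then 1 else 0)
  (hS : ∀ i j m : Fin N, S i j (Xc m) = Xc (Equiv.swap i j m))
include hLeib hpdX hS

lemma pd_S (a b l : Fin N) (F : RatField N) :
    pd l (S a b F) = S a b (pd (Equiv.swap a b l) F) := by
  rw [S_pd pd S hLeib hpdX hS a b (Equiv.swap a b l), Equiv.swap_apply_self]

/-- difference of `pd i` past `Aop m`, reduced to the single `l = i` term -/
lemma pd_Aop_diff {i m : Fin N} (him : i ≠ m) (F : RatField N) :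
    pd i (Aop k S m F) - Aop k S m (pd i F)
      = -(pd i (Top k S m i F) - Top k S m i (pd i F)) := by
  rw [Aop, Aop, map_neg, map_sum, ← Finset.sum_neg_distrib, ← Finset.sum_neg_distrib,
    ← Finset.sum_sub_distrib]
  rw [show -(pd i (Top k S m i F) - Top k S m i (pd i F))
      = -pd i (Top k S m i F) - -Top k S m i (pd i F) by ring]
  apply Finset.sum_eq_single_of_mem i (Finset.mem_erase.mpr ⟨him, Finset.mem_univ i⟩)
  intro l hl hli
  have hlm : l ≠ m := (Finset.mem_erase.mp hl).1
  have hz : pd i (Top k S m l F) = Top k S m l (pd i F) := by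
    rw [Top, Top, mul_assoc, pd_cmul pd i k, hLeib, map_sub,
      pd_S pd S hLeib hpdX hS m l i, Equiv.swap_apply_of_ne_of_ne him hli.symm,
      pd_g pd hLeib hpdX i m l hlm.symm, if_neg him, if_neg hli.symm]
    ring
  rw [hz]
  ring

lemma pdA_cross {i m : Fin N} (him : i ≠ m) (F : RatField N) :
    (pd i (Aop k S m F) - Aop k S m (pd i F))
      - (pd m (Aop k S i F) - Aop k S i (pd m F)) = 0 := by
  rw [pd_Aop_diff k pd S hLeib hpdX hS him F, pd_Aop_diff k pd S hLeib hpdX hS him.symm F]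
  have h1 : pd i (Top k S m i F)
      = algebraMap ℂ (RatField N) k * ((Xc m - Xc i)⁻¹ * (pd i F - S m i (pd m F))
          + (Xc m - Xc i)⁻¹ * (Xc m - Xc i)⁻¹ * (F - S m i F)) := by
    rw [Top, mul_assoc, pd_cmul pd i k, hLeib, map_sub,
      pd_S pd S hLeib hpdX hS m i i, Equiv.swap_apply_right,
      pd_g pd hLeib hpdX i m i him.symm, if_neg him, if_pos rfl]
    ring
  have h2 : pd m (Top k S i m F)
      = algebraMap ℂ (RatField N) k * ((Xc i - Xc m)⁻¹ * (pd m F - S i m (pd i F))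
          + (Xc i - Xc m)⁻¹ * (Xc i - Xc m)⁻¹ * (F - S i m F)) := by
    rw [Top, mul_assoc, pd_cmul pd m k, hLeib, map_sub,
      pd_S pd S hLeib hpdX hS i m m, Equiv.swap_apply_right,
      pd_g pd hLeib hpdX m i m him, if_neg him.symm, if_pos rfl]
    ring
  rw [h1, h2, Top, Top]
  rw [g_neg i m, S_symm S hS i m (pd i F), S_symm S hS i m (pd m F), S_symm S hS i m F]
  ring

lemma Drat_comm (i m : Fin N) (F : RatField N) :
    Drat hbar k pd S i (Drat hbar k pd S m F) = Drat hbar k pd S m (Drat hbar k pd S i F) := by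
  rcases eq_or_ne i m with rfl | him
  · rfl
  have e1 : ∀ (a b : Fin N),
      Drat hbar k pd S a (Drat hbar k pd S b F)
        = algebraMap ℂ (RatField N) hbar * (algebraMap ℂ (RatField N) hbar * pd a (pd b F))
          + algebraMap ℂ (RatField N) hbar * pd a (Aop k S b F)
          + algebraMap ℂ (RatField N) hbar * Aop k S a (pd b F)
          + Aop k S a (Aop k S b F) := by
    intro a b
    rw [Drat_eq hbar k pd S b F, Drat_eq hbar k pd S a, map_add (pd a),
      Aop_add k S a, pd_cmul pd a hbar, Aop_cmul k S a hbar]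
    ring
  rw [e1 i m, e1 m i, pd_comm pd hLeib hpdX i m F, Aop_comm k S hS him F]
  have hcross := pdA_cross k pd S hLeib hpdX hS him F
  linear_combination algebraMap ℂ (RatField N) hbar * hcross

end Cross

section Final
variable (hbar k : ℂ)
  (pd : Fin N → (RatField N →ₗ[ℂ] RatField N))
  (S : Fin N → Fin N → (RatField N ≃ₐ[ℂ] RatField N))

lemma Aop_sum {α : Type*} (i : Fin N) (s : Finset α) (f : α → RatField N) :
    Aop k S i (∑ l ∈ s, f l) = ∑ l ∈ s, Aop k S i (f l) := by
  simp only [Aop, Top_sum]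
  rw [Finset.sum_comm, ← Finset.sum_neg_distrib]

lemma Aop_neg (i : Fin N) (G : RatField N) : Aop k S i (-G) = -Aop k S i G := by
  simp only [Aop, Top_neg, Finset.sum_neg_distrib, neg_neg]

lemma Drat_sub (i : Fin N) (G H : RatField N) :
    Drat hbar k pd S i (G - H) = Drat hbar k pd S i G - Drat hbar k pd S i H := by
  rw [Drat_eq, Drat_eq, Drat_eq, map_sub, show G - H = G + -H by ring, Aop_add, Aop_neg]
  ring

lemma Drat_sum {α : Type*} (i : Fin N) (s : Finset α) (f : α → RatField N) :
    Drat hbar k pd S i (∑ l ∈ s, f l) = ∑ l ∈ s, Drat hbar k pd S i (f l) := by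
  simp only [Drat_eq, map_sum, Aop_sum, Finset.mul_sum, Finset.sum_add_distrib]

lemma Drat_cmul (i : Fin N) (t : ℂ) (G : RatField N) :
    Drat hbar k pd S i (algebraMap ℂ (RatField N) t * G)
      = algebraMap ℂ (RatField N) t * Drat hbar k pd S i G := by
  rw [Drat_eq, Drat_eq, pd_cmul, Aop_cmul]
  ring

section withhyp
variable (hLeib : ∀ i, ∀ a b : RatField N, pd i (a * b) = a * pd i b + pd i a * b)
  (hpdX : ∀ i j : Fin N, pd i (Xc j) = if i = j then 1 else 0)
  (hS : ∀ i j m : Fin N, S i j (Xc m) = Xc (Equiv.swap i j m))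
include hS

lemma Aop_xmul {i m : Fin N} (him : i ≠ m) (G : RatField N) :
    Aop k S i (Xc m * G)
      = Xc m * Aop k S i G + algebraMap ℂ (RatField N) k * S i m G := by
  unfold Aop
  have hm : m ∈ Finset.univ.erase i := Finset.mem_erase.mpr ⟨him.symm, Finset.mem_univ m⟩
  rw [← Finset.add_sum_erase _ _ hm, ← Finset.add_sum_erase _ (fun j => Top k S i j G) hm]
  have h1 : Top k S i m (Xc m * G)
      = Xc m * Top k S i m G - algebraMap ℂ (RatField N) k * S i m G := by
    rw [Top, Top, map_mul, hS, Equiv.swap_apply_right]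
    have hinv : (Xc i - Xc m)⁻¹ * (Xc m - Xc i) = -1 := by
      linear_combination -(inv_mul_cancel₀ (Xc_sub_ne him))
    linear_combination (algebraMap ℂ (RatField N) k * S i m G) * hinv
  have h2 : ∀ j ∈ (Finset.univ.erase i).erase m,
      Top k S i j (Xc m * G) = Xc m * Top k S i j G := by
    intro j hj
    have hjm : j ≠ m := (Finset.mem_erase.mp hj).1
    rw [Top, Top, map_mul, hS, Equiv.swap_apply_of_ne_of_ne him.symm hjm.symm]
    ring
  rw [h1, Finset.sum_congr rfl h2]
  have hmulsum : Xc m * ∑ x ∈ (Finset.univ.erase i).erase m, Top k S i x G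
      = ∑ x ∈ (Finset.univ.erase i).erase m, Xc m * Top k S i x G := Finset.mul_sum _ _ _
  linear_combination hmulsum

include hLeib hpdX in
lemma Drat_xmul {i m : Fin N} (him : i ≠ m) (G : RatField N) :
    Drat hbar k pd S i (Xc m * G)
      = Xc m * Drat hbar k pd S i G + algebraMap ℂ (RatField N) k * S i m G := by
  have h3 : pd i (Xc m * G) = Xc m * pd i G := by
    rw [hLeib, hpdX, if_neg him, zero_mul, add_zero]
  rw [Drat_eq, Drat_eq, h3, Aop_xmul k S hS him G]
  ring

end withhyp
end Final

section Steps
variable (hbar k : ℂ)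
  (pd : Fin N → (RatField N →ₗ[ℂ] RatField N))
  (S : Fin N → Fin N → (RatField N ≃ₐ[ℂ] RatField N))
  (hLeib : ∀ i, ∀ a b : RatField N, pd i (a * b) = a * pd i b + pd i a * b)
  (hpdX : ∀ i j : Fin N, pd i (Xc j) = if i = j then 1 else 0)
  (hS : ∀ i j m : Fin N, S i j (Xc m) = Xc (Equiv.swap i j m))
include hLeib hpdX hS

lemma stepP {i m : Fin N} (him : i ≠ m) (F : RatField N) :
    Xc i * Drat hbar k pd S i (Xc m * Drat hbar k pd S m F)
      - Xc m * Drat hbar k pd S m (Xc i * Drat hbar k pd S i F)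
    = algebraMap ℂ (RatField N) k * (Xc i * Drat hbar k pd S i (S i m F))
      - algebraMap ℂ (RatField N) k * (Xc m * Drat hbar k pd S m (S i m F)) := by
  rw [Drat_xmul hbar k pd S hLeib hpdX hS him (Drat hbar k pd S m F),
    Drat_xmul hbar k pd S hLeib hpdX hS him.symm (Drat hbar k pd S i F),
    S_Drat hbar k pd S hS hLeib hpdX i m m F, Equiv.swap_apply_right,
    S_Drat hbar k pd S hS hLeib hpdX m i i F, Equiv.swap_apply_right,
    S_symm S hS m i F,
    Drat_comm hbar k pd S hLeib hpdX hS i m F]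
  ring

lemma stepSm {i m : Fin N} (hlt : i < m) (F : RatField N) :
    Xc i * Drat hbar k pd S i
        (∑ j ∈ Finset.univ.filter (fun j => j < m), algebraMap ℂ (RatField N) k * S m j F)
      - ∑ j ∈ Finset.univ.filter (fun j => j < m),
          algebraMap ℂ (RatField N) k * S m j (Xc i * Drat hbar k pd S i F)
    = algebraMap ℂ (RatField N) k * (Xc i * Drat hbar k pd S i (S i m F))
      - algebraMap ℂ (RatField N) k * (Xc m * Drat hbar k pd S m (S i m F)) := by
  have him : i ≠ m := ne_of_lt hlt
  rw [Drat_sum hbar k pd S i]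
  simp only [Drat_cmul hbar k pd S i k]
  rw [Finset.mul_sum, ← Finset.sum_sub_distrib]
  rw [Finset.sum_eq_single_of_mem i
    (show i ∈ Finset.univ.filter (fun j => j < m) from
      Finset.mem_filter.mpr ⟨Finset.mem_univ i, hlt⟩) ?side]
  · rw [map_mul, hS, Equiv.swap_apply_right,
      S_Drat hbar k pd S hS hLeib hpdX m i i F, Equiv.swap_apply_right,
      S_symm S hS m i F]
    ring
  · intro j hj hji
    have hjm : j < m := (Finset.mem_filter.mp hj).2
    rw [map_mul, hS, Equiv.swap_apply_of_ne_of_ne him hji.symm,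
      S_Drat hbar k pd S hS hLeib hpdX m j i F,
      Equiv.swap_apply_of_ne_of_ne him hji.symm]
    ring

lemma stepSi {i m : Fin N} (hlt : i < m) (F : RatField N) :
    ∑ j ∈ Finset.univ.filter (fun j => j < i),
        algebraMap ℂ (RatField N) k * S i j (Xc m * Drat hbar k pd S m F)
      - Xc m * Drat hbar k pd S m
          (∑ j ∈ Finset.univ.filter (fun j => j < i), algebraMap ℂ (RatField N) k * S i j F)
    = 0 := by
  have him : i ≠ m := ne_of_lt hlt
  rw [Drat_sum hbar k pd S m]
  simp only [Drat_cmul hbar k pd S m k]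
  rw [Finset.mul_sum, ← Finset.sum_sub_distrib]
  apply Finset.sum_eq_zero
  intro j hj
  have hji : j < i := (Finset.mem_filter.mp hj).2
  have hmj : m ≠ j := (lt_trans hji hlt).ne'
  rw [map_mul, hS, Equiv.swap_apply_of_ne_of_ne him.symm hmj,
    S_Drat hbar k pd S hS hLeib hpdX i j m F,
    Equiv.swap_apply_of_ne_of_ne him.symm hmj]
  ring

omit hLeib hpdX in
lemma stepSS {i m : Fin N} (hlt : i < m) (F : RatField N) :
    ∑ j ∈ Finset.univ.filter (fun j => j < i),
        algebraMap ℂ (RatField N) k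
          * S i j (∑ l ∈ Finset.univ.filter (fun l => l < m),
              algebraMap ℂ (RatField N) k * S m l F)
    = ∑ l ∈ Finset.univ.filter (fun l => l < m),
        algebraMap ℂ (RatField N) k
          * S m l (∑ j ∈ Finset.univ.filter (fun j => j < i),
              algebraMap ℂ (RatField N) k * S i j F) := by
  have him : i ≠ m := ne_of_lt hlt
  simp only [map_sum, map_mul, AlgEquiv.commutes, Finset.mul_sum]
  conv_rhs => rw [Finset.sum_comm]
  apply Finset.sum_congr rfl
  intro j hj
  have hji : j < i := (Finset.mem_filter.mp hj).2
  have hmi : m ≠ i := him.symm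
  have hmj : m ≠ j := (lt_trans hji hlt).ne'
  refine Finset.sum_equiv (Equiv.swap i j) (fun l => ?_) (fun l hl => ?_)
  · simp only [Finset.mem_filter, Finset.mem_univ, true_and]
    rcases eq_or_ne l i with rfl | hli
    · rw [Equiv.swap_apply_left]
      exact iff_of_true hlt (lt_trans hji hlt)
    · rcases eq_or_ne l j with rfl | hlj
      · rw [Equiv.swap_apply_right]
        exact iff_of_true (lt_trans hji hlt) hlt
      · rw [Equiv.swap_apply_of_ne_of_ne hli hlj]
  · rw [S_conj S hS i j m l, Equiv.swap_apply_of_ne_of_ne hmi hmj]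

lemma main_lt {i m : Fin N} (hlt : i < m) (F : RatField N) :
    Dtrig hbar k pd S i (Dtrig hbar k pd S m F)
      = Dtrig hbar k pd S m (Dtrig hbar k pd S i F) := by
  have him : i ≠ m := ne_of_lt hlt
  have h1 := stepP hbar k pd S hLeib hpdX hS him F
  have h2 := stepSm hbar k pd S hLeib hpdX hS hlt F
  have h3 := stepSi hbar k pd S hLeib hpdX hS hlt F
  have h4 := stepSS k S hS hlt F
  simp only [Dtrig]
  rw [Drat_sub hbar k pd S i, Drat_sub hbar k pd S m]
  simp only [map_sub, mul_sub]
  rw [Finset.sum_sub_distrib, Finset.sum_sub_distrib]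
  linear_combination h1 - h2 - h3 + h4

end Steps

end Dunkl

theorem statement5 (hbar k : ℂ)
    (pd : Fin N → (RatField N →ₗ[ℂ] RatField N))
    (hLeib : ∀ i, ∀ a b : RatField N, pd i (a * b) = a * pd i b + pd i a * b)
    (hpdX : ∀ i j : Fin N, pd i (Xc j) = if i = j then 1 else 0)
    (S : Fin N → Fin N → (RatField N ≃ₐ[ℂ] RatField N))
    (hS : ∀ i j m : Fin N, S i j (Xc m) = Xc (Equiv.swap i j m)) :
    ∀ i m : Fin N, ∀ F : RatField N,
      Dtrig hbar k pd S i (Dtrig hbar k pd S m F) = Dtrig hbar k pd S m (Dtrig hbar k pd S i F) := by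
  intro i m F
  rcases lt_trichotomy i m with h | h | h
  · exact Dunkl.main_lt hbar k pd S hLeib hpdX hS h F
  · subst h; rfl
  · exact (Dunkl.main_lt hbar k pd S hLeib hpdX hS h F).symm

end
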